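/- Assume N mod s = 0 and the polyphase norms n(0),...,n(s-1) of x are pairwise distinct. Then the polyphase component selected by APS (the component of maximal ℓ2-norm) applied to the circular shift of x by m bins equals, up to a cyclic shift within the component, the APS output applied to x; in particular the two outputs are equal as multisets of entries. -/

import Mathlib

open Complex Finset

noncomputable section

/-- Circular shift by `m` bins: `(shift N m x) k = x ((k - m) mod N)`. -/
def shift (N : ℕ) (m : ℤ) (x : Fin N → ℂ) : Fin N → ℂ :=
  fun k => x ⟨(((k : ℤ) - m) % N).toNat, by
    have hN : 0 < N := k.pos
    have h1 := Int.emod_nonneg ((k : ℤ) - m) (by exact_mod_cast hN.ne' : (N:ℤ) ≠ 0)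
    have h2 := Int.emod_lt_of_pos ((k : ℤ) - m) (by exact_mod_cast hN : (0:ℤ) < N)
    omega⟩

/-- Polyphase component at offset `j`: the vector `k ↦ x (j + k·s)`. -/
def poly (N s : ℕ) (j : Fin s) (x : Fin N → ℂ) : Fin (N / s) → ℂ :=
  fun k => x ⟨((j : ℕ) + (k : ℕ) * s) % N,
    Nat.mod_lt _ (lt_of_lt_of_le k.pos (Nat.div_le_self N s))⟩

/-- Squared ℓ2 norm of a finite complex vector. -/
def nrm2 {L : ℕ} (v : Fin L → ℂ) : ℝ := ∑ k, ‖v k‖ ^ 2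

/-- ℓ2 norm of a finite complex vector. -/
def l2 {L : ℕ} (v : Fin L → ℂ) : ℝ := Real.sqrt (nrm2 v)

/-- Multiset of entries of a vector. -/
def entries {L : ℕ} (v : Fin L → ℂ) : Multiset ℂ := Finset.univ.val.map v

/-- The element of `Fin s` given by `a mod s`. -/
def modFin (s : ℕ) (hs : 0 < s) (a : ℤ) : Fin s :=
  ⟨(a % s).toNat, by
    have h1 := Int.emod_nonneg a (by exact_mod_cast hs.ne' : (s:ℤ) ≠ 0)
    have h2 := Int.emod_lt_of_pos a (by exact_mod_cast hs : (0:ℤ) < s)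
    omega⟩

/-- Circular convolution `(x ⋆ w)[k] = Σ_j x[(k-j) mod N] w[j]`. -/
def cconv (N : ℕ) (x w : Fin N → ℂ) : Fin N → ℂ :=
  fun k => ∑ j : Fin N, shift N (j : ℤ) x k * w j

/-- Elementwise complex ReLU. -/
def crelu {L : ℕ} (x : Fin L → ℂ) : Fin L → ℂ :=
  fun k => ⟨max (x k).re 0, max (x k).im 0⟩

/-- Global average pooling. -/
def gap {L : ℕ} (x : Fin L → ℂ) : ℂ := (∑ k, x k) / L

/-- Discrete Fourier transform. -/
def dft (N : ℕ) (x : Fin N → ℂ) : Fin N → ℂ :=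
  fun k => ∑ n : Fin N, x n * Complex.exp (-2 * Real.pi * Complex.I * k * n / N)

lemma modFin_coe {n : ℕ} (hn : 0 < n) (a : ℤ) :
    ((modFin n hn a : ℕ) : ℤ) = a % n := by
  have h1 := Int.emod_nonneg a (by exact_mod_cast hn.ne' : (n:ℤ) ≠ 0)
  simp [modFin, Int.toNat_of_nonneg h1]

lemma modFin_congr {n : ℕ} (hn : 0 < n) {a b : ℤ} (h : a % n = b % n) :
    modFin n hn a = modFin n hn b := by
  apply Fin.ext
  simp [modFin, h]

lemma modFin_coe_self {n : ℕ} (hn : 0 < n) (k : Fin n) :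
    modFin n hn (k : ℤ) = k := by
  apply Fin.ext
  have : ((k : ℕ) : ℤ) % n = (k : ℕ) := Int.emod_eq_of_lt (by positivity)
    (by exact_mod_cast k.isLt)
  simp [modFin, this]

/-- Cyclic translation as an equivalence on `Fin L`. -/
def shiftEquiv' (L : ℕ) (hL : 0 < L) (t : ℤ) : Fin L ≃ Fin L where
  toFun k := modFin L hL ((k : ℤ) - t)
  invFun k := modFin L hL ((k : ℤ) + t)
  left_inv k := by
    show modFin L hL (((modFin L hL ((k : ℤ) - t) : ℕ) : ℤ) + t) = k
    rw [modFin_coe hL]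
    have h2 : (((k:ℤ) - t) % L + t) % L = ((k:ℤ)) % L := by
      rw [Int.emod_add_emod]; ring_nf
    rw [modFin_congr hL h2, modFin_coe_self]
  right_inv k := by
    show modFin L hL (((modFin L hL ((k : ℤ) + t) : ℕ) : ℤ) - t) = k
    rw [modFin_coe hL]
    have h2 : (((k:ℤ) + t) % L - t) % L = ((k:ℤ)) % L := by
      rw [Int.sub_emod, Int.emod_emod_of_dvd _ dvd_rfl, ← Int.sub_emod]; ring_nf
    rw [modFin_congr hL h2, modFin_coe_self]

lemma shift_eq_comp {L : ℕ} (hL : 0 < L) (t : ℤ) (v : Fin L → ℂ) :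
    shift L t v = v ∘ (shiftEquiv' L hL t) := by
  funext k
  rfl

lemma l2_shift {L : ℕ} (t : ℤ) (v : Fin L → ℂ) :
    l2 (shift L t v) = l2 v := by
  rcases Nat.eq_zero_or_pos L with h | hL
  · subst h
    unfold l2 nrm2
    simp
  rw [shift_eq_comp hL]
  unfold l2 nrm2
  congr 1
  exact Fintype.sum_equiv (shiftEquiv' L hL t) _ _ (fun k => rfl)

lemma entries_shift {L : ℕ} (t : ℤ) (v : Fin L → ℂ) :
    entries (shift L t v) = entries v := by
  rcases Nat.eq_zero_or_pos L with h | hL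
  · subst h
    unfold entries
    simp
  rw [shift_eq_comp hL]
  unfold entries
  have : (Finset.univ.val.map ⇑(shiftEquiv' L hL t)) = Finset.univ.val := by
    have := Finset.map_univ_equiv (shiftEquiv' L hL t)
    calc Finset.univ.val.map ⇑(shiftEquiv' L hL t)
        = (Finset.univ.map (shiftEquiv' L hL t).toEmbedding).val := rfl
      _ = Finset.univ.val := by rw [this]
  calc Finset.univ.val.map (v ∘ ⇑(shiftEquiv' L hL t))
      = (Finset.univ.val.map ⇑(shiftEquiv' L hL t)).map v := by
        rw [Multiset.map_map]
    _ = Finset.univ.val.map v := by rw [this]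

lemma shift_apply {N : ℕ} (hN : 0 < N) (m : ℤ) (x : Fin N → ℂ) (k : Fin N) :
    shift N m x k = x (modFin N hN ((k : ℤ) - m)) := rfl

lemma poly_apply {N s : ℕ} (hN : 0 < N) (j : Fin s) (x : Fin N → ℂ) (k : Fin (N / s)) :
    poly N s j x k = x (modFin N hN ((j : ℤ) + (k : ℤ) * s)) := by
  unfold poly
  apply congrArg
  apply Fin.ext
  show ((j : ℕ) + (k : ℕ) * s) % N = (modFin N hN ((j : ℤ) + (k : ℤ) * s) : ℕ)
  have h := modFin_coe hN ((j : ℤ) + (k : ℤ) * s)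
  have goalZ : ((((j : ℕ) + (k : ℕ) * s) % N : ℕ) : ℤ)
      = ((modFin N hN ((j : ℤ) + (k : ℤ) * s) : ℕ) : ℤ) := by
    rw [h]
    push_cast
    ring_nf
  exact_mod_cast goalZ

/-- The polyphase component of a shifted signal is a cyclic shift of a polyphase component. -/
lemma poly_shift (N s : ℕ) (hs : 0 < s) (hd : s ∣ N) (hN : 0 < N)
    (x : Fin N → ℂ) (m : ℤ) (j : Fin s) :
    ∃ t : ℤ, poly N s j (shift N m x) = shift (N / s) t (poly N s (modFin s hs ((j : ℤ) - m)) x) := by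
  set L := N / s with hLdef
  have hNsL : N = s * L := (Nat.mul_div_cancel' hd).symm
  have hL : 0 < L := by
    rcases Nat.eq_zero_or_pos L with h | h
    · rw [h, Nat.mul_zero] at hNsL; omega
    · exact h
  set j' : Fin s := modFin s hs ((j : ℤ) - m) with hj'
  have hj'coe : ((j' : ℕ) : ℤ) = ((j : ℤ) - m) % s := modFin_coe hs _
  set q : ℤ := ((j : ℤ) - m) / s with hq
  have hqs : (j : ℤ) - m - (j' : ℕ) = s * q := by
    rw [hj'coe, hq]
    have := Int.mul_ediv_add_emod ((j : ℤ) - m) s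
    linarith
  refine ⟨-q, ?_⟩
  funext k
  rw [poly_apply hN, shift_apply hL]
  rw [poly_apply hN]
  -- LHS: shift N m x at index modFin N hN (j + k*s)
  rw [shift_apply hN]
  apply congrArg
  apply modFin_congr
  -- LHS index: (modFin N hN (j + k*s) : ℤ) - m ; RHS index: j' + (modFin L hL (k + q)) * s
  have hl : ((modFin N hN ((j : ℤ) + (k : ℤ) * s) : ℕ) : ℤ) = ((j : ℤ) + (k : ℤ) * s) % N :=
    modFin_coe hN _
  have hr : ((modFin L hL ((k : ℤ) - (-q)) : ℕ) : ℤ) = ((k : ℤ) + q) % L := by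
    rw [modFin_coe hL]; ring_nf
  rw [hl, hr]
  -- Now show: (((j + k*s) % N) - m) % N = ((j' : ℤ) + ((k + q) % L) * s) % N
  have key1 : (((j : ℤ) + (k : ℤ) * s) % N - m) % N = ((j : ℤ) + (k : ℤ) * s - m) % N := by
    rw [Int.sub_emod, Int.emod_emod_of_dvd _ dvd_rfl, ← Int.sub_emod]
  rw [key1]
  -- ((k + q) % L) * s ≡ (k + q) * s  (mod N), since N = s * L
  obtain ⟨c, hc⟩ : (L : ℤ) ∣ (((k : ℤ) + q) % L - ((k : ℤ) + q)) := by
    refine ⟨-((((k : ℤ) + q)) / L), ?_⟩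
    have := Int.mul_ediv_add_emod ((k : ℤ) + q) L
    linarith
  have key2 : ((j' : ℤ) + (((k : ℤ) + q) % L) * s) % N = ((j' : ℤ) + ((k : ℤ) + q) * s) % N := by
    have hNsLz : (N : ℤ) = (s : ℤ) * L := by exact_mod_cast hNsL
    have hdvd : (N : ℤ) ∣ ((j' : ℤ) + ((k : ℤ) + q) * s) - ((j' : ℤ) + (((k : ℤ) + q) % L) * s) := by
      refine ⟨-c, ?_⟩
      have e : ((j' : ℤ) + ((k : ℤ) + q) * s) - ((j' : ℤ) + (((k : ℤ) + q) % L) * s)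
          = -((((k : ℤ) + q) % L - ((k : ℤ) + q))) * s := by ring
      rw [e, hc, hNsLz]; ring
    exact Int.modEq_iff_dvd.mpr hdvd
  rw [key2]
  congr 1
  -- push_cast
  linarith [hqs]

theorem stmt3 (N s : ℕ) (hs : 0 < s) (hd : s ∣ N) (x : Fin N → ℂ) (m : ℤ)
    (hdist : ∀ j j' : Fin s, j ≠ j' → l2 (poly N s j x) ≠ l2 (poly N s j' x))
    (j1 j2 : Fin s)
    (h1 : ∀ j : Fin s, l2 (poly N s j x) ≤ l2 (poly N s j1 x))
    (h2 : ∀ j : Fin s, l2 (poly N s j (shift N m x)) ≤ l2 (poly N s j2 (shift N m x))) :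
    (∃ t : ℤ, poly N s j2 (shift N m x) = shift (N / s) t (poly N s j1 x)) ∧
    entries (poly N s j2 (shift N m x)) = entries (poly N s j1 x) := by
  rcases Nat.eq_zero_or_pos N with hN0 | hN
  · -- degenerate case N = 0
    have hL0 : N / s = 0 := by rw [hN0, Nat.zero_div]
    haveI : IsEmpty (Fin (N / s)) := by rw [hL0]; infer_instance
    constructor
    · refine ⟨0, ?_⟩
      funext k
      exact (IsEmpty.false k).elim
    · unfold entries
      have he : (Finset.univ : Finset (Fin (N / s))).val = 0 := by simp
      rw [he]; simp
  · have hnorm : ∀ j : Fin s,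
        l2 (poly N s j (shift N m x)) = l2 (poly N s (modFin s hs ((j : ℤ) - m)) x) := by
      intro j
      obtain ⟨t, ht⟩ := poly_shift N s hs hd hN x m j
      rw [ht, l2_shift]
    have hsurj : ∀ j' : Fin s,
        modFin s hs (((modFin s hs ((j' : ℤ) + m) : Fin s) : ℤ) - m) = j' := by
      intro j'
      have hc : ((modFin s hs ((j' : ℤ) + m) : ℕ) : ℤ) = ((j' : ℤ) + m) % s := modFin_coe hs _
      rw [show (((modFin s hs ((j' : ℤ) + m) : Fin s) : ℤ)) = ((j' : ℤ) + m) % s from hc]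
      have h2' : (((j' : ℤ) + m) % s - m) % s = ((j' : ℤ)) % s := by
        rw [Int.sub_emod, Int.emod_emod_of_dvd _ dvd_rfl, ← Int.sub_emod]; ring_nf
      rw [modFin_congr hs h2', modFin_coe_self]
    have hmax : modFin s hs ((j2 : ℤ) - m) = j1 := by
      by_contra hne
      apply hdist _ _ hne
      apply le_antisymm (h1 _)
      calc l2 (poly N s j1 x)
          = l2 (poly N s (modFin s hs (((modFin s hs ((j1 : ℤ) + m) : Fin s) : ℤ) - m)) x) := by
            rw [hsurj j1]
        _ = l2 (poly N s (modFin s hs ((j1 : ℤ) + m)) (shift N m x)) := (hnorm _).symm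
        _ ≤ l2 (poly N s j2 (shift N m x)) := h2 _
        _ = l2 (poly N s (modFin s hs ((j2 : ℤ) - m)) x) := hnorm _
    obtain ⟨t, ht⟩ := poly_shift N s hs hd hN x m j2
    rw [hmax] at ht
    refine ⟨⟨t, ht⟩, ?_⟩
    rw [ht, entries_shift]
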